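/- Edwards–Sokal one- and two-point identities on a finite graph with ghost: for all x, y ∈ V, ⟨σ_x⟩_{J,H} = P̂_{J,H}( x ↔ g ) and ⟨σ_x σ_y⟩_{J,H} = P̂_{J,H}( x ↔ y ). -/

import Mathlib

open scoped Classical

namespace FK

variable {V : Type*} [Fintype V] [DecidableEq V]

/-- Internal bond configurations on the edge set `E`. -/
abbrev Config (E : Finset (Sym2 V)) : Type _ := {e : Sym2 V // e ∈ E} → Bool

/-- Full bond configurations: internal edges together with the ghost edges
(one for each vertex). -/
abbrev GConfig (E : Finset (Sym2 V)) : Type _ := Config E × (V → Bool)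

/-- Two vertices are adjacent if they are distinct and joined by an open internal edge. -/
def adj (E : Finset (Sym2 V)) (ω : Config E) (u v : V) : Prop :=
  u ≠ v ∧ ∃ h : s(u, v) ∈ E, ω ⟨s(u, v), h⟩ = true

/-- The same-cluster relation of an internal configuration. -/
def conn (E : Finset (Sym2 V)) (ω : Config E) (u v : V) : Prop :=
  Relation.ReflTransGen (adj E ω) u v

/-- The cluster of a vertex. -/
noncomputable def cluster (E : Finset (Sym2 V)) (ω : Config E) (v : V) : Finset V :=
  Finset.univ.filter (fun u => conn E ω v u)

/-- The set of clusters (connected components) of an internal configuration. -/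
noncomputable def clusters (E : Finset (Sym2 V)) (ω : Config E) : Finset (Finset V) :=
  Finset.univ.image (cluster E ω)

/-- Adjacency in the extended graph, where `none` is the ghost vertex `g`. -/
def adjG (E : Finset (Sym2 V)) (ω : GConfig E) : Option V → Option V → Prop
  | some u, some v => adj E ω.1 u v
  | some u, none => ω.2 u = true
  | none, some v => ω.2 v = true
  | none, none => False

/-- Connectivity in the extended graph (with the ghost vertex `none`). -/
def connG (E : Finset (Sym2 V)) (ω : GConfig E) (x y : Option V) : Prop :=
  Relation.ReflTransGen (adjG E ω) x y

/-- Number of connected components of the extended graph not containing the ghost. -/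
noncomputable def kGhost (E : Finset (Sym2 V)) (ω : GConfig E) : ℕ :=
  (((Finset.univ : Finset V).filter (fun v => ¬ connG E ω (some v) none)).image
    (fun v => Finset.univ.filter (fun u : V => connG E ω (some v) (some u)))).card

/-- The product over internal edges of the usual FK edge weights. -/
noncomputable def edgeWeight (J : Sym2 V → ℝ) (E : Finset (Sym2 V)) (ω : Config E) : ℝ :=
  ∏ e : {e : Sym2 V // e ∈ E},
    if ω e then 1 - Real.exp (-2 * J e.1) else Real.exp (-2 * J e.1)

/-- Unnormalized FK (q = 2) weight with ghost. -/
noncomputable def fkWeight (J : Sym2 V → ℝ) (H : V → ℝ) (E : Finset (Sym2 V))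
    (ω : GConfig E) : ℝ :=
  2 ^ kGhost E ω * edgeWeight J E ω.1 *
    ∏ v, if ω.2 v then 1 - Real.exp (-2 * H v) else Real.exp (-2 * H v)

/-- The FK (q = 2) random-cluster measure with ghost. -/
noncomputable def fkProb (J : Sym2 V → ℝ) (H : V → ℝ) (E : Finset (Sym2 V))
    (ω : GConfig E) : ℝ :=
  fkWeight J H E ω / ∑ ω' : GConfig E, fkWeight J H E ω'

/-- The marginal of the FK measure with ghost on the internal edges. -/
noncomputable def fkMarginal (J : Sym2 V → ℝ) (H : V → ℝ) (E : Finset (Sym2 V))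
    (ωi : Config E) : ℝ :=
  ∑ ωg : V → Bool, fkProb J H E (ωi, ωg)

/-- Unnormalized zero-field random-cluster (q = 2) weight. -/
noncomputable def rcWeight (J : Sym2 V → ℝ) (E : Finset (Sym2 V)) (ω : Config E) : ℝ :=
  2 ^ (clusters E ω).card * edgeWeight J E ω

/-- The zero-field random-cluster (q = 2) measure. -/
noncomputable def rcProb (J : Sym2 V → ℝ) (E : Finset (Sym2 V)) (ω : Config E) : ℝ :=
  rcWeight J E ω / ∑ ω' : Config E, rcWeight J E ω'

/-- The spin value (±1) of a Boolean. -/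
def spin (b : Bool) : ℝ := if b then 1 else -1

/-- The product of the two spins at the endpoints of an (unordered) edge. -/
def pairSpin (σ : V → Bool) : Sym2 V → ℝ :=
  Sym2.lift ⟨fun u v => spin (σ u) * spin (σ v), fun u v => mul_comm _ _⟩

/-- Unnormalized Ising weight. -/
noncomputable def isingWeight (J : Sym2 V → ℝ) (H : V → ℝ) (E : Finset (Sym2 V))
    (σ : V → Bool) : ℝ :=
  Real.exp ((∑ e ∈ E, J e * pairSpin σ e) + ∑ v, H v * spin (σ v))

/-- The Ising Gibbs measure. -/
noncomputable def isingProb (J : Sym2 V → ℝ) (H : V → ℝ) (E : Finset (Sym2 V))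
    (σ : V → Bool) : ℝ :=
  isingWeight J H E σ / ∑ σ' : V → Bool, isingWeight J H E σ'

/-- Unnormalized Edwards–Sokal weight on pairs (spin configuration, bond configuration
with ghost); the ghost spin is `+1` (i.e. `true`). -/
noncomputable def esWeight (J : Sym2 V → ℝ) (H : V → ℝ) (E : Finset (Sym2 V))
    (p : (V → Bool) × GConfig E) : ℝ :=
  (∏ e : {e : Sym2 V // e ∈ E},
      if p.2.1 e then
        (if ∀ u ∈ e.1, ∀ v ∈ e.1, p.1 u = p.1 v then 1 - Real.exp (-2 * J e.1) else 0)
      else Real.exp (-2 * J e.1))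
  * ∏ v, if p.2.2 v then (if p.1 v = true then 1 - Real.exp (-2 * H v) else 0)
         else Real.exp (-2 * H v)

/-- The Edwards–Sokal coupling measure. -/
noncomputable def esProb (J : Sym2 V → ℝ) (H : V → ℝ) (E : Finset (Sym2 V))
    (p : (V → Bool) × GConfig E) : ℝ :=
  esWeight J H E p / ∑ p' : (V → Bool) × GConfig E, esWeight J H E p'

end FK
namespace FK

variable {V : Type*} [Fintype V] [DecidableEq V]

lemma adj_symm {E : Finset (Sym2 V)} {ω : Config E} {u v : V} (h : adj E ω u v) :
    adj E ω v u := by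
  obtain ⟨hne, he, hω⟩ := h
  refine ⟨hne.symm, ?_⟩
  rw [Sym2.eq_swap]
  exact ⟨he, hω⟩

lemma adjG_symm {E : Finset (Sym2 V)} {ω : GConfig E} {a b : Option V} (h : adjG E ω a b) :
    adjG E ω b a := by
  match a, b, h with
  | some u, some v, h => exact adj_symm h
  | some u, none, h => exact h
  | none, some v, h => exact h

lemma connG_symm {E : Finset (Sym2 V)} {ω : GConfig E} {a b : Option V}
    (h : connG E ω a b) : connG E ω b a := by
  induction h with
  | refl => exact Relation.ReflTransGen.refl
  | tail _ h2 ih => exact Relation.ReflTransGen.head (adjG_symm h2) ih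

/-- Admissibility of a spin configuration with respect to a bond configuration. -/
def admG (E : Finset (Sym2 V)) (ω : GConfig E) (σ : V → Bool) : Prop :=
  (∀ e : {e : Sym2 V // e ∈ E}, ω.1 e = true → ∀ u ∈ e.1, ∀ v ∈ e.1, σ u = σ v) ∧
  (∀ v : V, ω.2 v = true → σ v = true)

lemma connG_of_mem_edge {E : Finset (Sym2 V)} {ω : GConfig E} {e : {e : Sym2 V // e ∈ E}}
    (hopen : ω.1 e = true) {u v : V} (hu : u ∈ e.1) (hv : v ∈ e.1) :
    connG E ω (some u) (some v) := by
  by_cases huv : u = v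
  · subst huv; exact Relation.ReflTransGen.refl
  · obtain ⟨e, heE⟩ := e
    have he : e = s(u, v) := (Sym2.mem_and_mem_iff huv).mp ⟨hu, hv⟩
    subst he
    exact Relation.ReflTransGen.single ⟨huv, heE, hopen⟩

lemma admG_val {E : Finset (Sym2 V)} {ω : GConfig E} {σ : V → Bool} (h : admG E ω σ)
    {a b : Option V} (hc : connG E ω a b) :
    a.elim true σ = b.elim true σ := by
  induction hc with
  | refl => rfl
  | @tail b c _ h2 ih =>
    rw [ih]
    match b, c, h2 with
    | some u, some v, h2 =>
      obtain ⟨hne, he, hω⟩ := h2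
      exact h.1 ⟨s(u, v), he⟩ hω u (Sym2.mem_mk_left u v) v (Sym2.mem_mk_right u v)
    | some u, none, h2 => exact h.2 u h2
    | none, some v, h2 => exact (h.2 v h2).symm

/-- The ghost-bond part of the FK weight. -/
noncomputable def ghW (H : V → ℝ) (E : Finset (Sym2 V)) (ω : GConfig E) : ℝ :=
  ∏ v, if ω.2 v then 1 - Real.exp (-2 * H v) else Real.exp (-2 * H v)

lemma esWeight_eq_ite (J : Sym2 V → ℝ) (H : V → ℝ) (E : Finset (Sym2 V))
    (ω : GConfig E) (σ : V → Bool) :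
    esWeight J H E (σ, ω) =
      if admG E ω σ then edgeWeight J E ω.1 * ghW H E ω else 0 := by
  by_cases h : admG E ω σ
  · rw [if_pos h]
    unfold esWeight edgeWeight ghW
    congr 1
    · refine Finset.prod_congr rfl fun e _ => ?_
      by_cases hb : ω.1 e = true
      · rw [if_pos hb, if_pos hb, if_pos (h.1 e hb)]
      · rw [if_neg hb, if_neg hb]
    · refine Finset.prod_congr rfl fun v _ => ?_
      by_cases hb : ω.2 v = true
      · rw [if_pos hb, if_pos hb, if_pos (h.2 v hb)]
      · rw [if_neg hb, if_neg hb]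
  · rw [if_neg h]
    unfold admG at h
    rcases not_and_or.mp h with h1 | h1
    · push_neg at h1
      obtain ⟨e, hopen, u, hu, v, hv, hne⟩ := h1
      apply mul_eq_zero_of_left
      apply Finset.prod_eq_zero (Finset.mem_univ e)
      rw [if_pos hopen, if_neg fun hall => hne (hall u hu v hv)]
    · push_neg at h1
      obtain ⟨v, hopen, hfalse⟩ := h1
      apply mul_eq_zero_of_right
      apply Finset.prod_eq_zero (Finset.mem_univ v)
      rw [if_pos hopen, if_neg hfalse]

end FK
namespace FK

variable {V : Type*} [Fintype V] [DecidableEq V]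

/-- The extended cluster of a vertex. -/
noncomputable def clG (E : Finset (Sym2 V)) (ω : GConfig E) (v : V) : Finset V :=
  Finset.univ.filter (fun u : V => connG E ω (some v) (some u))

/-- The set of ghost-free clusters. -/
noncomputable def SG (E : Finset (Sym2 V)) (ω : GConfig E) : Finset (Finset V) :=
  ((Finset.univ : Finset V).filter (fun v => ¬ connG E ω (some v) none)).image (clG E ω)

lemma kGhost_eq (E : Finset (Sym2 V)) (ω : GConfig E) : kGhost E ω = (SG E ω).card := rfl

lemma clG_congr {E : Finset (Sym2 V)} {ω : GConfig E} {u v : V}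
    (h : connG E ω (some u) (some v)) : clG E ω u = clG E ω v := by
  ext w
  simp only [clG, Finset.mem_filter, Finset.mem_univ, true_and]
  exact ⟨fun hw => (connG_symm h).trans hw, fun hw => h.trans hw⟩

lemma nonempty_of_mem_SG {E : Finset (Sym2 V)} {ω : GConfig E} {C : Finset V}
    (hC : C ∈ SG E ω) : C.Nonempty := by
  obtain ⟨v, _, rfl⟩ := Finset.mem_image.mp hC
  exact ⟨v, Finset.mem_filter.mpr ⟨Finset.mem_univ v, Relation.ReflTransGen.refl⟩⟩

lemma mem_clG {E : Finset (Sym2 V)} {ω : GConfig E} {v u : V} :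
    u ∈ clG E ω v ↔ connG E ω (some v) (some u) := by
  simp [clG]

/-- Build a spin configuration from an assignment of spins to ghost-free clusters. -/
noncomputable def build (E : Finset (Sym2 V)) (ω : GConfig E)
    (g : {C // C ∈ SG E ω} → Bool) (v : V) : Bool :=
  if h : connG E ω (some v) none then true
  else g ⟨clG E ω v,
    Finset.mem_image_of_mem _ (Finset.mem_filter.mpr ⟨Finset.mem_univ v, h⟩)⟩

lemma build_admG (E : Finset (Sym2 V)) (ω : GConfig E) (g : {C // C ∈ SG E ω} → Bool) :
    admG E ω (build E ω g) := by
  constructor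
  · intro e hopen u hu v' hv
    have hcon := connG_of_mem_edge hopen hu hv
    have h1 : connG E ω (some u) none ↔ connG E ω (some v') none :=
      ⟨fun h => (connG_symm hcon).trans h, fun h => hcon.trans h⟩
    unfold build
    by_cases hg : connG E ω (some u) none
    · rw [dif_pos hg, dif_pos (h1.mp hg)]
    · rw [dif_neg hg, dif_neg (fun h => hg (h1.mpr h))]
      congr 1
      exact Subtype.ext (clG_congr hcon)
  · intro v hv
    have hc : connG E ω (some v) none :=
      Relation.ReflTransGen.single (show adjG E ω (some v) none from hv)
    exact dif_pos hc

end FK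
namespace FK

variable {V : Type*} [Fintype V] [DecidableEq V]

/-- Admissible spin configurations are in bijection with spin assignments on
ghost-free clusters. -/
noncomputable def admEquiv (E : Finset (Sym2 V)) (ω : GConfig E) :
    {σ : V → Bool // admG E ω σ} ≃ ({C // C ∈ SG E ω} → Bool) where
  toFun σ C := σ.1 (nonempty_of_mem_SG C.2).choose
  invFun g := ⟨build E ω g, build_admG E ω g⟩
  left_inv := by
    rintro ⟨σ, hσ⟩
    apply Subtype.ext
    funext v
    show build E ω (fun C => σ (nonempty_of_mem_SG C.2).choose) v = σ v
    unfold build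
    by_cases h : connG E ω (some v) none
    · rw [dif_pos h]
      exact (admG_val hσ h).symm
    · rw [dif_neg h]
      have hrep := (nonempty_of_mem_SG (C := clG E ω v)
        (Finset.mem_image_of_mem _ (Finset.mem_filter.mpr ⟨Finset.mem_univ v, h⟩))).choose_spec
      exact (admG_val hσ (mem_clG.mp hrep)).symm
  right_inv := by
    intro g
    funext C
    obtain ⟨C, hC⟩ := C
    show build E ω g (nonempty_of_mem_SG hC).choose = g ⟨C, hC⟩
    obtain ⟨w, hw, rfl⟩ := Finset.mem_image.mp hC
    have hwg : ¬ connG E ω (some w) none := (Finset.mem_filter.mp hw).2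
    set r := (nonempty_of_mem_SG hC).choose with hr
    have hwr : connG E ω (some w) (some r) := mem_clG.mp (nonempty_of_mem_SG hC).choose_spec
    have hrg : ¬ connG E ω (some r) none := fun h => hwg (hwr.trans h)
    unfold build
    rw [dif_neg hrg]
    congr 1
    exact Subtype.ext (clG_congr (connG_symm hwr))

lemma card_admG (E : Finset (Sym2 V)) (ω : GConfig E) :
    ((Finset.univ : Finset (V → Bool)).filter (admG E ω)).card = 2 ^ kGhost E ω := by
  have h := Fintype.card_congr (admEquiv E ω)
  rw [Fintype.card_fun, Fintype.card_coe, Fintype.card_bool] at h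
  rw [kGhost_eq, ← h]
  rw [Fintype.card_subtype]

end FK
namespace FK

variable {V : Type*} [Fintype V] [DecidableEq V]

lemma sum_esWeight (J : Sym2 V → ℝ) (H : V → ℝ) (E : Finset (Sym2 V)) (ω : GConfig E) :
    ∑ σ : V → Bool, esWeight J H E (σ, ω) = fkWeight J H E ω := by
  simp_rw [esWeight_eq_ite]
  rw [← Finset.sum_filter, Finset.sum_const, card_admG, nsmul_eq_mul]
  unfold fkWeight ghW
  push_cast
  ring

/-- Flip the spins on the extended cluster of `z`. -/
noncomputable def flipAt (E : Finset (Sym2 V)) (ω : GConfig E) (z : V) (σ : V → Bool) :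
    V → Bool :=
  fun v => if connG E ω (some z) (some v) then !(σ v) else σ v

lemma flipAt_invol (E : Finset (Sym2 V)) (ω : GConfig E) (z : V) :
    Function.Involutive (flipAt E ω z) := by
  intro σ
  funext v
  unfold flipAt
  by_cases h : connG E ω (some z) (some v) <;> simp [h]

lemma admG_flipAt {E : Finset (Sym2 V)} {ω : GConfig E} {z : V}
    (hz : ¬ connG E ω (some z) none) {σ : V → Bool} (h : admG E ω σ) :
    admG E ω (flipAt E ω z σ) := by
  constructor
  · intro e hopen u hu v hv
    have hσ := h.1 e hopen u hu v hv
    have hcon := connG_of_mem_edge hopen hu hv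
    unfold flipAt
    by_cases hzu : connG E ω (some z) (some u)
    · rw [if_pos hzu, if_pos (show connG E ω (some z) (some v) from hzu.trans hcon), hσ]
    · rw [if_neg hzu, if_neg (fun hzv => hzu (hzv.trans (connG_symm hcon))), hσ]
  · intro v hv
    have hvg : connG E ω (some v) none :=
      Relation.ReflTransGen.single (show adjG E ω (some v) none from hv)
    have hnz : ¬ connG E ω (some z) (some v) := fun hc => hz (hc.trans hvg)
    unfold flipAt
    rw [if_neg hnz]
    exact h.2 v hv

lemma esWeight_flipAt (J : Sym2 V → ℝ) (H : V → ℝ) {E : Finset (Sym2 V)} {ω : GConfig E}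
    {z : V} (hz : ¬ connG E ω (some z) none) (σ : V → Bool) :
    esWeight J H E (flipAt E ω z σ, ω) = esWeight J H E (σ, ω) := by
  rw [esWeight_eq_ite, esWeight_eq_ite]
  by_cases h : admG E ω σ
  · rw [if_pos h, if_pos (admG_flipAt hz h)]
  · rw [if_neg h, if_neg (fun h' => h (flipAt_invol E ω z σ ▸ admG_flipAt hz h'))]

lemma sum_esWeight_flip_zero (J : Sym2 V → ℝ) (H : V → ℝ) {E : Finset (Sym2 V)}
    {ω : GConfig E} {z : V} (hz : ¬ connG E ω (some z) none)
    (f : (V → Bool) → ℝ) (hf : ∀ σ, f (flipAt E ω z σ) = - f σ) :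
    ∑ σ : V → Bool, esWeight J H E (σ, ω) * f σ = 0 := by
  have key : (∑ σ : V → Bool, esWeight J H E (σ, ω) * f σ)
      = -∑ σ : V → Bool, esWeight J H E (σ, ω) * f σ := by
    conv_lhs => rw [← Equiv.sum_comp ((flipAt_invol E ω z).toPerm)
      (fun σ => esWeight J H E (σ, ω) * f σ)]
    simp only [Function.Involutive.coe_toPerm]
    simp only [esWeight_flipAt J H hz, hf, mul_neg]
    rw [Finset.sum_neg_distrib]
  linarith

end FK
namespace FK

variable {V : Type*} [Fintype V] [DecidableEq V]

lemma spin_not (b : Bool) : spin (!b) = - spin b := by cases b <;> simp [spin]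

lemma spin_mul_self (b : Bool) : spin b * spin b = 1 := by cases b <;> norm_num [spin]

lemma flipAt_self {E : Finset (Sym2 V)} {ω : GConfig E} (z : V) (σ : V → Bool) :
    flipAt E ω z σ z = !(σ z) := by
  unfold flipAt
  rw [if_pos (show connG E ω (some z) (some z) from Relation.ReflTransGen.refl)]

lemma flipAt_of_not_conn {E : Finset (Sym2 V)} {ω : GConfig E} {z w : V}
    (h : ¬ connG E ω (some z) (some w)) (σ : V → Bool) :
    flipAt E ω z σ w = σ w := by
  unfold flipAt
  rw [if_neg h]

lemma sum_esWeight_spin (J : Sym2 V → ℝ) (H : V → ℝ) (E : Finset (Sym2 V))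
    (ω : GConfig E) (x : V) :
    ∑ σ : V → Bool, esWeight J H E (σ, ω) * spin (σ x)
      = if connG E ω (some x) none then fkWeight J H E ω else 0 := by
  by_cases hx : connG E ω (some x) none
  · rw [if_pos hx, ← sum_esWeight J H E ω]
    refine Finset.sum_congr rfl fun σ _ => ?_
    rw [esWeight_eq_ite]
    by_cases h : admG E ω σ
    · have hxt : σ x = true := admG_val h hx
      rw [hxt]
      simp [spin]
    · simp [if_neg h]
  · rw [if_neg hx]
    refine sum_esWeight_flip_zero J H hx (fun σ => spin (σ x)) fun σ => ?_
    show spin (flipAt E ω x σ x) = - spin (σ x)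
    rw [flipAt_self, spin_not]

lemma sum_esWeight_spin2 (J : Sym2 V → ℝ) (H : V → ℝ) (E : Finset (Sym2 V))
    (ω : GConfig E) (x y : V) :
    ∑ σ : V → Bool, esWeight J H E (σ, ω) * (spin (σ x) * spin (σ y))
      = if connG E ω (some x) (some y) then fkWeight J H E ω else 0 := by
  by_cases hxy : connG E ω (some x) (some y)
  · rw [if_pos hxy, ← sum_esWeight J H E ω]
    refine Finset.sum_congr rfl fun σ _ => ?_
    rw [esWeight_eq_ite]
    by_cases h : admG E ω σ
    · have hxy' : σ x = σ y := admG_val h hxy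
      rw [hxy', spin_mul_self, mul_one]
    · simp [if_neg h]
  · rw [if_neg hxy]
    by_cases hx : connG E ω (some x) none
    · have hy : ¬ connG E ω (some y) none := fun h => hxy (hx.trans (connG_symm h))
      refine sum_esWeight_flip_zero J H hy (fun σ => spin (σ x) * spin (σ y)) fun σ => ?_
      show spin (flipAt E ω y σ x) * spin (flipAt E ω y σ y) = -(spin (σ x) * spin (σ y))
      rw [flipAt_self, spin_not,
        flipAt_of_not_conn (fun h => hxy (connG_symm h)) σ]
      ring
    · refine sum_esWeight_flip_zero J H hx (fun σ => spin (σ x) * spin (σ y)) fun σ => ?_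
      show spin (flipAt E ω x σ x) * spin (flipAt E ω x σ y) = -(spin (σ x) * spin (σ y))
      rw [flipAt_self, spin_not, flipAt_of_not_conn hxy σ]
      ring

end FK
namespace FK

variable {V : Type*} [Fintype V] [DecidableEq V]

lemma pairSpin_eq {e : Sym2 V} (hd : ¬ e.IsDiag) (σ : V → Bool) :
    pairSpin σ e = if ∀ u ∈ e, ∀ v ∈ e, σ u = σ v then 1 else -1 := by
  induction e using Sym2.ind with
  | _ a b =>
    have hab : a ≠ b := by rwa [Sym2.mk_isDiag_iff] at hd
    have hcond : (∀ u ∈ s(a, b), ∀ v ∈ s(a, b), σ u = σ v) ↔ σ a = σ b := by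
      constructor
      · intro h
        exact h a (Sym2.mem_mk_left a b) b (Sym2.mem_mk_right a b)
      · intro h u hu v hv
        rw [Sym2.mem_iff] at hu hv
        rcases hu with rfl | rfl <;> rcases hv with rfl | rfl <;>
          first | rfl | exact h | exact h.symm
    by_cases h : σ a = σ b
    · rw [if_pos (hcond.mpr h)]
      simp only [pairSpin, Sym2.lift_mk, h]
      exact spin_mul_self _
    · rw [if_neg (fun hc => h (hcond.mp hc))]
      simp only [pairSpin, Sym2.lift_mk]
      cases ha : σ a <;> cases hb : σ b <;> simp_all [spin]

lemma sum_esWeight_bonds (J : Sym2 V → ℝ) (H : V → ℝ) (E : Finset (Sym2 V))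
    (hE : ∀ e ∈ E, ¬ e.IsDiag) (σ : V → Bool) :
    ∑ ω : GConfig E, esWeight J H E (σ, ω)
      = Real.exp (-(∑ e ∈ E, J e) - ∑ v, H v) * isingWeight J H E σ := by
  have step1 : ∑ ω : GConfig E, esWeight J H E (σ, ω)
      = (∑ ωi : Config E, ∏ e : {e : Sym2 V // e ∈ E},
          if ωi e then
            (if ∀ u ∈ e.1, ∀ v ∈ e.1, σ u = σ v then 1 - Real.exp (-2 * J e.1) else 0)
          else Real.exp (-2 * J e.1))
        * (∑ ωg : V → Bool, ∏ v,
            if ωg v then (if σ v = true then 1 - Real.exp (-2 * H v) else 0)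
            else Real.exp (-2 * H v)) := by
    rw [Fintype.sum_prod_type, Finset.sum_mul_sum]
    rfl
  rw [step1]
  have hedge : (∑ ωi : Config E, ∏ e : {e : Sym2 V // e ∈ E},
          if ωi e then
            (if ∀ u ∈ e.1, ∀ v ∈ e.1, σ u = σ v then 1 - Real.exp (-2 * J e.1) else 0)
          else Real.exp (-2 * J e.1))
      = ∏ e : {e : Sym2 V // e ∈ E},
          Real.exp (J e.1 * pairSpin σ e.1) * Real.exp (-(J e.1)) := by
    rw [← Fintype.prod_sum fun (e : {e : Sym2 V // e ∈ E}) (b : Bool) =>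
      if b then
        (if ∀ u ∈ e.1, ∀ v ∈ e.1, σ u = σ v then 1 - Real.exp (-2 * J e.1) else 0)
      else Real.exp (-2 * J e.1)]
    refine Finset.prod_congr rfl fun e _ => ?_
    rw [Fintype.sum_bool]
    rw [if_pos (show (true : Bool) = true from rfl)]
    rw [if_neg (show ¬((false : Bool) = true) by simp)]
    rw [pairSpin_eq (hE e.1 e.2) σ]
    by_cases hc : ∀ u ∈ e.1, ∀ v ∈ e.1, σ u = σ v
    · rw [if_pos hc, if_pos hc, mul_one, ← Real.exp_add, add_neg_cancel, Real.exp_zero]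
      ring
    · rw [if_neg hc, if_neg hc, zero_add, mul_neg_one, ← Real.exp_add]
      congr 1
      ring
  have hvert : (∑ ωg : V → Bool, ∏ v,
          if ωg v then (if σ v = true then 1 - Real.exp (-2 * H v) else 0)
          else Real.exp (-2 * H v))
      = ∏ v, Real.exp (H v * spin (σ v)) * Real.exp (-(H v)) := by
    rw [← Fintype.prod_sum fun (v : V) (b : Bool) =>
      if b then (if σ v = true then 1 - Real.exp (-2 * H v) else 0)
      else Real.exp (-2 * H v)]
    refine Finset.prod_congr rfl fun v _ => ?_
    rw [Fintype.sum_bool]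
    rw [if_pos (show (true : Bool) = true from rfl)]
    rw [if_neg (show ¬((false : Bool) = true) by simp)]
    cases hv : σ v
    · rw [if_neg (show ¬((false : Bool) = true) by simp), zero_add]
      show Real.exp (-2 * H v) = Real.exp (H v * spin false) * Real.exp (-H v)
      rw [show spin false = -1 by simp [spin], mul_neg_one, ← Real.exp_add]
      congr 1
      ring
    · rw [if_pos (show (true : Bool) = true from rfl)]
      show 1 - Real.exp (-2 * H v) + Real.exp (-2 * H v)
          = Real.exp (H v * spin true) * Real.exp (-H v)
      rw [show spin true = 1 by simp [spin], mul_one, ← Real.exp_add, add_neg_cancel,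
        Real.exp_zero]
      ring
  rw [hedge, hvert]
  rw [Finset.prod_mul_distrib, Finset.prod_mul_distrib,
    ← Real.exp_sum, ← Real.exp_sum, ← Real.exp_sum, ← Real.exp_sum]
  unfold isingWeight
  rw [← Real.exp_add, ← Real.exp_add, ← Real.exp_add, ← Real.exp_add]
  congr 1
  rw [Finset.sum_coe_sort E (fun e => J e * pairSpin σ e),
    Finset.sum_coe_sort E (fun e => -(J e))]
  simp only [Finset.sum_neg_distrib]
  ring
end FK

/-- Edwards–Sokal one- and two-point identities:
`⟨σ_x⟩ = P̂(x ↔ g)` and `⟨σ_x σ_y⟩ = P̂(x ↔ y)`. -/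
theorem edwards_sokal_correlation_identities
    {V : Type*} [Fintype V] [DecidableEq V]
    (E : Finset (Sym2 V)) (hE : ∀ e ∈ E, ¬ e.IsDiag)
    (J : Sym2 V → ℝ) (hJ : ∀ e ∈ E, 0 ≤ J e)
    (H : V → ℝ) (hH : ∀ v, 0 ≤ H v) (x y : V) :
    ((∑ σ : V → Bool, FK.isingProb J H E σ * FK.spin (σ x))
      = ∑ ω : FK.GConfig E,
          if FK.connG E ω (some x) none then FK.fkProb J H E ω else 0) ∧
    ((∑ σ : V → Bool, FK.isingProb J H E σ * (FK.spin (σ x) * FK.spin (σ y)))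
      = ∑ ω : FK.GConfig E,
          if FK.connG E ω (some x) (some y) then FK.fkProb J H E ω else 0) := by
  set c := Real.exp (-(∑ e ∈ E, J e) - ∑ v, H v) with hc
  have hcne : c ≠ 0 := Real.exp_ne_zero _
  have hZ : (∑ ω : FK.GConfig E, FK.fkWeight J H E ω)
      = c * ∑ σ : V → Bool, FK.isingWeight J H E σ := by
    calc (∑ ω : FK.GConfig E, FK.fkWeight J H E ω)
        = ∑ ω : FK.GConfig E, ∑ σ : V → Bool, FK.esWeight J H E (σ, ω) :=
          Finset.sum_congr rfl fun ω _ => (FK.sum_esWeight J H E ω).symm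
      _ = ∑ σ : V → Bool, ∑ ω : FK.GConfig E, FK.esWeight J H E (σ, ω) := Finset.sum_comm
      _ = ∑ σ : V → Bool, c * FK.isingWeight J H E σ :=
          Finset.sum_congr rfl fun σ _ => FK.sum_esWeight_bonds J H E hE σ
      _ = c * ∑ σ : V → Bool, FK.isingWeight J H E σ := (Finset.mul_sum _ _ _).symm
  have main : ∀ f : (V → Bool) → ℝ, ∀ P : FK.GConfig E → Prop,
      (∀ ω : FK.GConfig E, ∑ σ : V → Bool, FK.esWeight J H E (σ, ω) * f σ
          = if P ω then FK.fkWeight J H E ω else 0) →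
      (∑ σ : V → Bool, FK.isingProb J H E σ * f σ)
        = ∑ ω : FK.GConfig E, if P ω then FK.fkProb J H E ω else 0 := by
    intro f P hP
    have hN : (∑ ω : FK.GConfig E, if P ω then FK.fkWeight J H E ω else 0)
        = c * ∑ σ : V → Bool, FK.isingWeight J H E σ * f σ := by
      calc (∑ ω : FK.GConfig E, if P ω then FK.fkWeight J H E ω else 0)
          = ∑ ω : FK.GConfig E, ∑ σ : V → Bool, FK.esWeight J H E (σ, ω) * f σ :=
            Finset.sum_congr rfl fun ω _ => (hP ω).symm
        _ = ∑ σ : V → Bool, ∑ ω : FK.GConfig E, FK.esWeight J H E (σ, ω) * f σ :=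
            Finset.sum_comm
        _ = ∑ σ : V → Bool, (∑ ω : FK.GConfig E, FK.esWeight J H E (σ, ω)) * f σ := by
            simp_rw [Finset.sum_mul]
        _ = ∑ σ : V → Bool, c * (FK.isingWeight J H E σ * f σ) := by
            refine Finset.sum_congr rfl fun σ _ => ?_
            rw [FK.sum_esWeight_bonds J H E hE σ, mul_assoc]
        _ = c * ∑ σ : V → Bool, FK.isingWeight J H E σ * f σ := (Finset.mul_sum _ _ _).symm
    have lhs_eq : (∑ σ : V → Bool, FK.isingProb J H E σ * f σ)
        = (∑ σ : V → Bool, FK.isingWeight J H E σ * f σ)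
            / (∑ σ : V → Bool, FK.isingWeight J H E σ) := by
      rw [Finset.sum_div]
      refine Finset.sum_congr rfl fun σ _ => ?_
      rw [FK.isingProb, div_mul_eq_mul_div]
    have rhs_eq : (∑ ω : FK.GConfig E, if P ω then FK.fkProb J H E ω else 0)
        = (∑ ω : FK.GConfig E, if P ω then FK.fkWeight J H E ω else 0)
            / (∑ ω : FK.GConfig E, FK.fkWeight J H E ω) := by
      rw [Finset.sum_div]
      refine Finset.sum_congr rfl fun ω _ => ?_
      by_cases h : P ω
      · rw [if_pos h, if_pos h, FK.fkProb]
      · rw [if_neg h, if_neg h, zero_div]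
    rw [lhs_eq, rhs_eq, hZ, hN, mul_div_mul_left _ _ hcne]
  exact ⟨main (fun σ => FK.spin (σ x)) (fun ω => FK.connG E ω (some x) none)
      (fun ω => FK.sum_esWeight_spin J H E ω x),
    main (fun σ => FK.spin (σ x) * FK.spin (σ y)) (fun ω => FK.connG E ω (some x) (some y))
      (fun ω => FK.sum_esWeight_spin2 J H E ω x y)⟩
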